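/- Let F be a non-archimedean local field, G = GL₂(F), N the group of upper-triangular unipotent matrices, A the diagonal torus, and K_A = A ∩ GL₂(O) the group of diagonal matrices with unit entries. A complete set of representatives for the double-coset space A \ (N\G) / K_A (i.e., orbits of the two-sided action of A × K_A on N\G) is given by the matrices [[1,0],[π^γ,1]] for 0 ≤ γ ≤ ∞ (where π^∞ := 0) and [[0,1],[1,π^γ]] for 1 ≤ γ ≤ ∞, and these represent pairwise distinct orbits. -/

import Mathlib

open Matrix

variable {F : Type*} [Field F]

/-- Upper-triangular unipotent 2×2 matrices (the group `N`). -/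
def IsUpperUnip (n : Matrix (Fin 2) (Fin 2) F) : Prop :=
  n 0 0 = 1 ∧ n 1 1 = 1 ∧ n 1 0 = 0

/-- Invertible diagonal 2×2 matrices (the torus `A`). -/
def IsDiagTorus (a : Matrix (Fin 2) (Fin 2) F) : Prop :=
  a 0 1 = 0 ∧ a 1 0 = 0 ∧ a 0 0 ≠ 0 ∧ a 1 1 ≠ 0

/-- Diagonal matrices with entries units of `O` (the compact torus `K_A = A ∩ GL₂(O)`). -/
def IsDiagUnits (O : Subring F) (k : Matrix (Fin 2) (Fin 2) F) : Prop :=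
  k 0 1 = 0 ∧ k 1 0 = 0 ∧ k 0 0 ∈ O ∧ (k 0 0)⁻¹ ∈ O ∧ k 1 1 ∈ O ∧ (k 1 1)⁻¹ ∈ O

/-- `g` and `g'` lie in the same orbit of the two-sided action of `A × K_A` on `N\G`:
`g' = n ⬝ a ⬝ g ⬝ k` for some `n ∈ N`, `a ∈ A`, `k ∈ K_A`. -/
def OrbitRel (O : Subring F) (g g' : Matrix (Fin 2) (Fin 2) F) : Prop :=
  ∃ n a k : Matrix (Fin 2) (Fin 2) F,
    IsUpperUnip n ∧ IsDiagTorus a ∧ IsDiagUnits O k ∧ g' = n * (a * (g * k))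

/-- The claimed representatives: `[[1,0],[π^γ,1]]` for `0 ≤ γ ≤ ∞` and `[[0,1],[1,π^γ]]` for
`1 ≤ γ ≤ ∞`, with the convention `π^∞ = 0`. -/
def Reps (π : F) : Set (Matrix (Fin 2) (Fin 2) F) :=
  {M | (∃ γ : ℕ, M = !![1, 0; π ^ γ, 1]) ∨ M = !![1, 0; 0, 1] ∨
       (∃ γ : ℕ, 1 ≤ γ ∧ M = !![0, 1; 1, π ^ γ]) ∨ M = !![0, 1; 1, 0]}

section Aux
variable (v : F → ℤ)

lemma aux_v_one (hv_mul : ∀ x y : F, x ≠ 0 → y ≠ 0 → v (x * y) = v x + v y) : v 1 = 0 := by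
  have h := hv_mul 1 1 one_ne_zero one_ne_zero
  rw [mul_one] at h; omega

lemma aux_v_inv (hv_mul : ∀ x y : F, x ≠ 0 → y ≠ 0 → v (x * y) = v x + v y)
    {x : F} (hx : x ≠ 0) : v x⁻¹ = - v x := by
  have h := hv_mul x x⁻¹ hx (inv_ne_zero hx)
  rw [mul_inv_cancel₀ hx, aux_v_one v hv_mul] at h; omega

lemma aux_v_pow (π : F) (hπ0 : π ≠ 0) (hπ : v π = 1)
    (hv_mul : ∀ x y : F, x ≠ 0 → y ≠ 0 → v (x * y) = v x + v y) (m : ℕ) :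
    v (π ^ m) = m := by
  induction m with
  | zero => simpa using aux_v_one v hv_mul
  | succ k ih =>
      rw [pow_succ, hv_mul _ _ (pow_ne_zero k hπ0) hπ0, ih, hπ]
      push_cast; ring

lemma aux_v3 (hv_mul : ∀ x y : F, x ≠ 0 → y ≠ 0 → v (x * y) = v x + v y)
    {x y z : F} (hx : x ≠ 0) (hy : y ≠ 0) (hz : z ≠ 0) :
    v (x * y * z) = v x + v y + v z := by
  rw [hv_mul _ _ (mul_ne_zero hx hy) hz, hv_mul _ _ hx hy]

lemma aux_v_unit (O : Subring F)
    (hv_mul : ∀ x y : F, x ≠ 0 → y ≠ 0 → v (x * y) = v x + v y)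
    (hO : ∀ x : F, x ≠ 0 → (x ∈ O ↔ 0 ≤ v x)) {x : F} (hx : x ≠ 0)
    (h1 : x ∈ O) (h2 : x⁻¹ ∈ O) : v x = 0 := by
  have a1 := (hO x hx).1 h1
  have a2 := (hO x⁻¹ (inv_ne_zero hx)).1 h2
  rw [aux_v_inv v hv_mul hx] at a2; omega

lemma aux_unit_of_v (O : Subring F)
    (hv_mul : ∀ x y : F, x ≠ 0 → y ≠ 0 → v (x * y) = v x + v y)
    (hO : ∀ x : F, x ≠ 0 → (x ∈ O ↔ 0 ≤ v x)) {x : F} (hx : x ≠ 0)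
    (h : v x = 0) : x ∈ O ∧ x⁻¹ ∈ O := by
  refine ⟨(hO x hx).2 (by omega), (hO x⁻¹ (inv_ne_zero hx)).2 ?_⟩
  rw [aux_v_inv v hv_mul hx]; omega

end Aux

lemma orbit_construct (O : Subring F) (g κ : Matrix (Fin 2) (Fin 2) F)
    (hg : g.det ≠ 0) (hκ : κ.det ≠ 0)
    {lam u w : F} (hlam : lam ≠ 0) (hu0 : u ≠ 0) (hw0 : w ≠ 0)
    (huO : u ∈ O) (huO' : u⁻¹ ∈ O) (hwO : w ∈ O) (hwO' : w⁻¹ ∈ O)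
    (h10 : κ 1 0 = lam * g 1 0 * u) (h11 : κ 1 1 = lam * g 1 1 * w) :
    OrbitRel O g κ := by
  rw [Matrix.det_fin_two] at hg hκ
  have hDne : lam * u * w * (g 0 0 * g 1 1 - g 0 1 * g 1 0) ≠ 0 :=
    mul_ne_zero (mul_ne_zero (mul_ne_zero hlam hu0) hw0) hg
  obtain ⟨t, ht⟩ : ∃ t : F, t = (κ 0 0 * κ 1 1 - κ 0 1 * κ 1 0) /
      (lam * u * w * (g 0 0 * g 1 1 - g 0 1 * g 1 0)) := ⟨_, rfl⟩
  obtain ⟨x, hx⟩ : ∃ x : F, x = (g 0 0 * u * κ 0 1 - g 0 1 * w * κ 0 0) /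
      (lam * u * w * (g 0 0 * g 1 1 - g 0 1 * g 1 0)) := ⟨_, rfl⟩
  have htne : t ≠ 0 := by rw [ht]; exact div_ne_zero hκ hDne
  refine ⟨!![1, x; 0, 1], !![t, 0; 0, lam], !![u, 0; 0, w], ?_, ?_, ?_, ?_⟩
  · refine ⟨by simp, by simp, by simp⟩
  · exact ⟨by simp, by simp, by simpa using htne, by simpa using hlam⟩
  · exact ⟨by simp, by simp, by simpa using huO, by simpa using huO', by simpa using hwO,
      by simpa using hwO'⟩
  · ext i j
    fin_cases i <;> fin_cases j <;>
      simp only [Matrix.mul_apply, Fin.sum_univ_two, Fin.mk_zero, Fin.mk_one,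
        Fin.isValue, Matrix.cons_val', Matrix.cons_val_zero, Matrix.cons_val_one,
        Matrix.head_cons, Matrix.head_fin_const, Matrix.empty_val',
        Matrix.cons_val_fin_one, Matrix.of_apply]
    · rw [ht, hx, h10, h11]; field_simp
      have hg' : g 1 1 * g 0 0 - g 1 0 * g 0 1 ≠ 0 := by
        intro h; apply hg; linear_combination h
      field_simp; ring
    · rw [ht, hx, h10, h11]; field_simp
      have hg' : g 1 1 * g 0 0 - g 1 0 * g 0 1 ≠ 0 := by
        intro h; apply hg; linear_combination h
      field_simp; ring
    · rw [h10]; ring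
    · rw [h11]; ring

lemma orbit_rows (O : Subring F) {g κ : Matrix (Fin 2) (Fin 2) F}
    (hκ : κ.det ≠ 0) (h : OrbitRel O g κ) :
    ∃ lam u w : F, lam ≠ 0 ∧ u ≠ 0 ∧ w ≠ 0 ∧ u ∈ O ∧ u⁻¹ ∈ O ∧ w ∈ O ∧ w⁻¹ ∈ O ∧
      κ 1 0 = lam * g 1 0 * u ∧ κ 1 1 = lam * g 1 1 * w := by
  obtain ⟨n, a, k, hn, ha, hk, he⟩ := h
  obtain ⟨hn00, hn11, hn10⟩ := hn
  obtain ⟨ha01, ha10, ha00, ha11⟩ := ha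
  obtain ⟨hk01, hk10, hk00O, hk00O', hk11O, hk11O'⟩ := hk
  have hdet : κ.det = n.det * (a.det * (g.det * k.det)) := by
    rw [he, Matrix.det_mul, Matrix.det_mul, Matrix.det_mul]
  rw [Matrix.det_fin_two n, Matrix.det_fin_two a, Matrix.det_fin_two k,
    hn00, hn11, hn10, ha01, ha10, hk01, hk10] at hdet
  have hprod : κ.det = a 0 0 * a 1 1 * g.det * (k 0 0 * k 1 1) := by rw [hdet]; ring
  have hk00 : k 0 0 ≠ 0 := by
    intro h0; rw [h0] at hprod; simp at hprod; exact hκ (by rw [hprod])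
  have hk11 : k 1 1 ≠ 0 := by
    intro h0; rw [h0] at hprod; simp at hprod; exact hκ (by rw [hprod])
  have e10 : κ 1 0 = a 1 1 * g 1 0 * k 0 0 := by
    rw [he]
    simp only [Matrix.mul_apply, Fin.sum_univ_two]
    rw [hn10, hn11, ha10, hk10]; ring
  have e11 : κ 1 1 = a 1 1 * g 1 1 * k 1 1 := by
    rw [he]
    simp only [Matrix.mul_apply, Fin.sum_univ_two]
    rw [hn10, hn11, ha10, hk01]; ring
  exact ⟨a 1 1, k 0 0, k 1 1, ha11, hk00, hk11, hk00O, hk00O', hk11O, hk11O', e10, e11⟩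


lemma reps_det (π : F) {M : Matrix (Fin 2) (Fin 2) F} (h : M ∈ Reps π) : M.det ≠ 0 := by
  rcases h with ⟨γ, rfl⟩ | rfl | ⟨γ, _, rfl⟩ | rfl <;>
    norm_num [Matrix.det_fin_two_of]

/-- Proposition "representatives": the listed matrices form a complete set of representatives
for the two-sided action of `A × K_A` on `N\GL₂(F)`, and they represent pairwise distinct
orbits. -/
theorem stmt_8 (O : Subring F) (v : F → ℤ) (π : F)
    (hπ0 : π ≠ 0) (hπ : v π = 1)
    (hv_mul : ∀ x y : F, x ≠ 0 → y ≠ 0 → v (x * y) = v x + v y)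
    (hO : ∀ x : F, x ≠ 0 → (x ∈ O ↔ 0 ≤ v x)) (h0O : (0 : F) ∈ O) :
    (∀ g : Matrix (Fin 2) (Fin 2) F, IsUnit g.det → ∃ κ ∈ Reps π, OrbitRel O g κ) ∧
    (∀ κ ∈ Reps π, ∀ κ' ∈ Reps π, OrbitRel O κ κ' → κ = κ') := by
  have h1O : (1 : F) ∈ O := O.one_mem
  have h1O' : ((1 : F))⁻¹ ∈ O := by simpa using O.one_mem
  constructor
  · intro g hg
    have hdet : g.det ≠ 0 := hg.ne_zero
    by_cases hc : g 1 0 = 0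
    · have hd : g 1 1 ≠ 0 := by
        intro h0; apply hdet; rw [Matrix.det_fin_two, hc, h0]; ring
      refine ⟨!![1, 0; 0, 1], Or.inr (Or.inl rfl),
        orbit_construct O g _ hdet (by norm_num [Matrix.det_fin_two_of])
          (inv_ne_zero hd) one_ne_zero one_ne_zero h1O h1O' h1O h1O' ?_ ?_⟩
      · simp [hc]
      · field_simp; simp
    · by_cases hd : g 1 1 = 0
      · refine ⟨!![0, 1; 1, 0], Or.inr (Or.inr (Or.inr rfl)),
          orbit_construct O g _ hdet (by norm_num [Matrix.det_fin_two_of])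
            (inv_ne_zero hc) one_ne_zero one_ne_zero h1O h1O' h1O h1O' ?_ ?_⟩
        · field_simp; simp
        · simp [hd]
      · by_cases hm : v (g 1 1) ≤ v (g 1 0)
        · set m : ℕ := (v (g 1 0) - v (g 1 1)).toNat with hmdef
          have hu0 : π ^ m * g 1 1 / g 1 0 ≠ 0 :=
            div_ne_zero (mul_ne_zero (pow_ne_zero _ hπ0) hd) hc
          have hvu : v (π ^ m * g 1 1 / g 1 0) = 0 := by
            rw [div_eq_mul_inv,
              aux_v3 v hv_mul (pow_ne_zero _ hπ0) hd (inv_ne_zero hc),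
              aux_v_pow v π hπ0 hπ hv_mul, aux_v_inv v hv_mul hc]
            omega
          obtain ⟨huO, huO'⟩ := aux_unit_of_v v O hv_mul hO hu0 hvu
          refine ⟨!![1, 0; π ^ m, 1], Or.inl ⟨m, rfl⟩,
            orbit_construct O g _ hdet (by norm_num [Matrix.det_fin_two_of])
              (inv_ne_zero hd) hu0 one_ne_zero huO huO' h1O h1O' ?_ ?_⟩
          · field_simp; simp
          · field_simp; simp
        · set m : ℕ := (v (g 1 1) - v (g 1 0)).toNat with hmdef
          have hm1 : 1 ≤ m := by omega
          have hw0 : π ^ m * g 1 0 / g 1 1 ≠ 0 :=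
            div_ne_zero (mul_ne_zero (pow_ne_zero _ hπ0) hc) hd
          have hvw : v (π ^ m * g 1 0 / g 1 1) = 0 := by
            rw [div_eq_mul_inv,
              aux_v3 v hv_mul (pow_ne_zero _ hπ0) hc (inv_ne_zero hd),
              aux_v_pow v π hπ0 hπ hv_mul, aux_v_inv v hv_mul hd]
            omega
          obtain ⟨hwO, hwO'⟩ := aux_unit_of_v v O hv_mul hO hw0 hvw
          refine ⟨!![0, 1; 1, π ^ m], Or.inr (Or.inr (Or.inl ⟨m, hm1, rfl⟩)),
            orbit_construct O g _ hdet (by norm_num [Matrix.det_fin_two_of])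
              (inv_ne_zero hc) one_ne_zero hw0 h1O h1O' hwO hwO' ?_ ?_⟩
          · field_simp; simp
          · field_simp; simp
  · intro κ hκm κ' hκ'm hrel
    obtain ⟨lam, u, w, hl, hu0, hw0, huO, huO', hwO, hwO', h10, h11⟩ :=
      orbit_rows O (reps_det π hκ'm) hrel
    have hvu : v u = 0 := aux_v_unit v O hv_mul hO hu0 huO huO'
    have hvw : v w = 0 := aux_v_unit v O hv_mul hO hw0 hwO hwO'
    have hv1 : v (1 : F) = 0 := aux_v_one v hv_mul
    rcases hκm with ⟨a, rfl⟩ | rfl | ⟨a, ha1, rfl⟩ | rfl <;>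
      rcases hκ'm with ⟨b, rfl⟩ | rfl | ⟨b, hb1, rfl⟩ | rfl <;>
      simp only [Matrix.cons_val', Matrix.cons_val_zero, Matrix.cons_val_one,
        Matrix.head_cons, Matrix.head_fin_const, Matrix.empty_val',
        Matrix.cons_val_fin_one, Matrix.of_apply, mul_one, mul_zero, zero_mul,
        one_mul, mul_zero] at h10 h11
    · -- T1 a / T1 b
      have e1 := aux_v3 v hv_mul hl (pow_ne_zero a hπ0) hu0
      rw [← h10, aux_v_pow v π hπ0 hπ hv_mul, aux_v_pow v π hπ0 hπ hv_mul] at e1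
      have e2 := hv_mul lam w hl hw0
      rw [← h11, hv1] at e2
      have hab : a = b := by omega
      rw [hab]
    · -- T1 a / T2
      exact absurd h10.symm (mul_ne_zero (mul_ne_zero hl (pow_ne_zero a hπ0)) hu0)
    · -- T1 a / T3 b
      have e1 := aux_v3 v hv_mul hl (pow_ne_zero a hπ0) hu0
      rw [← h10, hv1, aux_v_pow v π hπ0 hπ hv_mul] at e1
      have e2 := hv_mul lam w hl hw0
      rw [← h11, aux_v_pow v π hπ0 hπ hv_mul] at e2
      omega
    · -- T1 a / T4
      exact absurd h11.symm (mul_ne_zero hl hw0)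
    · -- T2 / T1 b
      exact absurd h10 (pow_ne_zero b hπ0)
    · -- T2 / T2
      rfl
    · -- T2 / T3 b
      exact absurd h10 one_ne_zero
    · -- T2 / T4
      exact absurd h10 one_ne_zero
    · -- T3 a / T1 b
      have e1 := hv_mul lam u hl hu0
      rw [← h10, aux_v_pow v π hπ0 hπ hv_mul] at e1
      have e2 := aux_v3 v hv_mul hl (pow_ne_zero a hπ0) hw0
      rw [← h11, hv1, aux_v_pow v π hπ0 hπ hv_mul] at e2
      omega
    · -- T3 a / T2
      exact absurd h10.symm (mul_ne_zero hl hu0)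
    · -- T3 a / T3 b
      have e1 := hv_mul lam u hl hu0
      rw [← h10, hv1] at e1
      have e2 := aux_v3 v hv_mul hl (pow_ne_zero a hπ0) hw0
      rw [← h11, aux_v_pow v π hπ0 hπ hv_mul, aux_v_pow v π hπ0 hπ hv_mul] at e2
      have hab : a = b := by omega
      rw [hab]
    · -- T3 a / T4
      exact absurd h11.symm (mul_ne_zero (mul_ne_zero hl (pow_ne_zero a hπ0)) hw0)
    · -- T4 / T1 b
      exact absurd h11 one_ne_zero
    · -- T4 / T2
      exact absurd h10.symm (mul_ne_zero hl hu0)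
    · -- T4 / T3 b
      exact absurd h11 (pow_ne_zero b hπ0)
    · -- T4 / T4
      rfl
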